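/- The functions h ↦ l⁺(h) = ∫₀^∞ ds/√(2(W(s)+h)) and h ↦ l⁻(h) = ∫_{−∞}^0 ds/√(2(W(s)+h)) are finite, continuous, strictly decreasing on (0,∞), and tend to 0 as h → ∞ and to ∞ as h → 0⁺. -/

import Mathlib

open MeasureTheory Set Filter

lemma quad_bound (f : ℝ → ℝ) (hf : ContDiff ℝ 2 f) (hnn : ∀ t, 0 ≤ f t) (h0 : f 0 = 0) :
    ∃ M : ℝ, 0 < M ∧ ∀ s ∈ Ioc (0:ℝ) 1, f s ≤ M * s ^ 2 := by
  have h2 : ContDiff ℝ ((1 : ℕ) + 1) f := by exact_mod_cast hf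
  have hd := contDiff_succ_iff_deriv.mp h2
  have hdf : Differentiable ℝ f := hd.1
  have hdd := contDiff_one_iff_deriv.mp hd.2.2
  have hmin : deriv f 0 = 0 := by
    have : IsLocalMin f 0 := Filter.Eventually.of_forall fun x => by rw [h0]; exact hnn x
    exact this.deriv_eq_zero
  obtain ⟨C, hC⟩ := (isCompact_Icc : IsCompact (Icc (0:ℝ) 1)).exists_bound_of_continuousOn
    hdd.2.continuousOn
  refine ⟨max C 1, lt_of_lt_of_le one_pos (le_max_right _ _), fun s hs => ?_⟩
  obtain ⟨c, hc, hceq⟩ := exists_deriv_eq_slope f hs.1 hdf.continuous.continuousOn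
    hdf.differentiableOn
  obtain ⟨d, hd', hdeq⟩ := exists_deriv_eq_slope (deriv f) hc.1 hdd.1.continuous.continuousOn
    hdd.1.differentiableOn
  have hs0 : (0:ℝ) < s := hs.1
  have hfs : f s = deriv f c * s := by
    rw [h0, sub_zero, sub_zero] at hceq
    rw [hceq, div_mul_cancel₀ _ hs.1.ne']
  have hdc : deriv f c = deriv (deriv f) d * c := by
    rw [hmin, sub_zero, sub_zero] at hdeq
    rw [hdeq, div_mul_cancel₀ _ hc.1.ne']
  have hdb : deriv (deriv f) d ≤ max C 1 := by
    have := hC d ⟨hd'.1.le, le_trans hd'.2.le (le_trans hc.2.le hs.2)⟩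
    calc deriv (deriv f) d ≤ ‖deriv (deriv f) d‖ := (Real.norm_eq_abs _) ▸ le_abs_self _
      _ ≤ C := this
      _ ≤ max C 1 := le_max_left _ _
  have hcpos : 0 < c := hc.1
  calc f s = deriv (deriv f) d * c * s := by rw [hfs, hdc]
    _ ≤ max C 1 * c * s := by
        apply mul_le_mul_of_nonneg_right (mul_le_mul_of_nonneg_right hdb hcpos.le) hs0.le
    _ ≤ max C 1 * s * s := by
        apply mul_le_mul_of_nonneg_right (mul_le_mul_of_nonneg_left hc.2.le (by positivity)) hs0.le
    _ = max C 1 * s ^ 2 := by ring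


lemma aux_half (V : ℝ → ℝ) (hVc : Continuous V) (hVnn : ∀ t, 0 ≤ V t)
    (M : ℝ) (hM : 0 < M) (hVq : ∀ s ∈ Ioc (0:ℝ) 1, V s ≤ M * s ^ 2)
    (hVint : IntegrableOn (fun u => 1 / Real.sqrt (V u)) (Ioi 1))
    (hVpos : ∀ t ∈ Ioi (0:ℝ), 0 < V t) :
    (∀ h : ℝ, 0 < h → IntegrableOn (fun s => 1 / Real.sqrt (2 * (V s + h))) (Ioi (0:ℝ))) ∧
    ContinuousOn (fun h => ∫ s in Ioi (0:ℝ), 1 / Real.sqrt (2 * (V s + h))) (Ioi 0) ∧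
    StrictAntiOn (fun h => ∫ s in Ioi (0:ℝ), 1 / Real.sqrt (2 * (V s + h))) (Ioi 0) ∧
    Tendsto (fun h => ∫ s in Ioi (0:ℝ), 1 / Real.sqrt (2 * (V s + h))) atTop (nhds 0) ∧
    Tendsto (fun h => ∫ s in Ioi (0:ℝ), 1 / Real.sqrt (2 * (V s + h))) (nhdsWithin 0 (Ioi 0))
      atTop := by
  set F : ℝ → ℝ → ℝ := fun h s => 1 / Real.sqrt (2 * (V s + h)) with hF
  have hden : ∀ h : ℝ, 0 < h → ∀ s, 0 < 2 * (V s + h) := by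
    intro h hh s; nlinarith [hVnn s]
  have hFcont : ∀ h : ℝ, 0 < h → Continuous (F h) := by
    intro h hh
    exact continuous_const.div (Real.continuous_sqrt.comp (by fun_prop))
      (fun s => (Real.sqrt_pos.mpr (hden h hh s)).ne')
  have hFnn : ∀ h s, 0 ≤ F h s := fun h s => by positivity
  have hFmono : ∀ h₁ h₂ : ℝ, 0 < h₁ → h₁ ≤ h₂ → ∀ s, F h₂ s ≤ F h₁ s := by
    intro h₁ h₂ hh₁ hle s
    apply one_div_le_one_div_of_le (Real.sqrt_pos.mpr (hden h₁ hh₁ s))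
    exact Real.sqrt_le_sqrt (by nlinarith)
  have hFlt : ∀ h₁ h₂ : ℝ, 0 < h₁ → h₁ < h₂ → ∀ s, F h₂ s < F h₁ s := by
    intro h₁ h₂ hh₁ hlt s
    apply one_div_lt_one_div_of_lt (Real.sqrt_pos.mpr (hden h₁ hh₁ s))
    exact Real.sqrt_lt_sqrt (hden h₁ hh₁ s).le (by nlinarith)
  -- Integrability
  have hint : ∀ h : ℝ, 0 < h → IntegrableOn (F h) (Ioi (0:ℝ)) := by
    intro h hh
    have h1 : IntegrableOn (F h) (Ioc (0:ℝ) 1) := (hFcont h hh).integrableOn_Ioc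
    have h2 : IntegrableOn (F h) (Ioi (1:ℝ)) := by
      apply Integrable.mono hVint ((hFcont h hh).aestronglyMeasurable.restrict)
      filter_upwards [ae_restrict_mem measurableSet_Ioi] with s hs
      have hVs : 0 < V s := hVpos s (mem_Ioi.mpr (lt_trans one_pos (mem_Ioi.mp hs)))
      rw [Real.norm_eq_abs, Real.norm_eq_abs, abs_of_nonneg (hFnn h s),
        abs_of_nonneg (by positivity)]
      apply one_div_le_one_div_of_le (Real.sqrt_pos.mpr hVs)
      exact Real.sqrt_le_sqrt (by nlinarith)
    have := h1.union h2
    rwa [Ioc_union_Ioi_eq_Ioi (by norm_num : (0:ℝ) ≤ 1)] at this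
  refine ⟨hint, ?_, ?_, ?_, ?_⟩
  -- Continuity
  · intro h₀ hh₀
    have hh₀' : (0:ℝ) < h₀ := hh₀
    have hhalf : (0:ℝ) < h₀ / 2 := by linarith
    apply tendsto_integral_filter_of_dominated_convergence (F (h₀ / 2))
    · filter_upwards [self_mem_nhdsWithin] with h hh
      exact ((hFcont h hh).aestronglyMeasurable.restrict)
    · have : Ioi (h₀ / 2) ∈ nhdsWithin h₀ (Ioi (0:ℝ)) :=
        mem_nhdsWithin_of_mem_nhds (Ioi_mem_nhds (by linarith))
      filter_upwards [this] with h hh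
      filter_upwards with s
      rw [Real.norm_eq_abs, abs_of_nonneg (hFnn h s)]
      exact hFmono (h₀ / 2) h hhalf (le_of_lt hh) s
    · exact hint (h₀ / 2) hhalf
    · filter_upwards with s
      have : ContinuousAt (fun h : ℝ => F h s) h₀ := by
        apply ContinuousAt.div continuousAt_const
        · exact (Real.continuous_sqrt.comp (by fun_prop)).continuousAt
        · exact (Real.sqrt_pos.mpr (hden h₀ hh₀' s)).ne'
      exact this.tendsto.mono_left nhdsWithin_le_nhds
  -- Strict antitonicity
  · intro a ha b hb hab
    simp only
    have h1 : IntegrableOn (F a) (Ioi (0:ℝ)) := hint a ha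
    have h2 : IntegrableOn (F b) (Ioi (0:ℝ)) := hint b hb
    have hlt : ∀ s, F b s < F a s := hFlt a b ha hab
    have hpos : 0 < ∫ s in Ioi (0:ℝ), (F a s - F b s) := by
      rw [setIntegral_pos_iff_support_of_nonneg_ae]
      · refine lt_of_lt_of_le ?_ (measure_mono (?_ : Ioi (0:ℝ) ⊆ _))
        · rw [Real.volume_Ioi]; exact ENNReal.zero_lt_top
        · intro s hs
          exact ⟨fun hc => (sub_ne_zero.mpr (hlt s).ne') hc, hs⟩
      · filter_upwards with s
        exact sub_nonneg.mpr (hlt s).le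
      · exact h1.sub h2
    rw [integral_sub h1 h2] at hpos
    linarith
  -- Tendsto atTop to 0
  · have key : Tendsto (fun h => ∫ s in Ioi (0:ℝ), F h s) atTop
        (nhds (∫ s in Ioi (0:ℝ), (0:ℝ))) := by
      apply tendsto_integral_filter_of_dominated_convergence (F 1)
      · filter_upwards [eventually_ge_atTop (1:ℝ)] with h hh
        exact ((hFcont h (by linarith)).aestronglyMeasurable.restrict)
      · filter_upwards [eventually_ge_atTop (1:ℝ)] with h hh
        filter_upwards with s
        rw [Real.norm_eq_abs, abs_of_nonneg (hFnn h s)]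
        exact hFmono 1 h one_pos hh s
      · exact hint 1 one_pos
      · filter_upwards with s
        have hsq : Tendsto (fun h : ℝ => Real.sqrt (2 * (V s + h))) atTop atTop := by
          have h1 : Tendsto (fun h : ℝ => 2 * (V s + h)) atTop atTop := by
            apply Tendsto.const_mul_atTop two_pos
            exact tendsto_atTop_add_const_left _ _ tendsto_id
          have h2 : Tendsto Real.sqrt atTop atTop := by
            have heq : Real.sqrt = fun x : ℝ => x ^ (1/2 : ℝ) :=
              funext fun x => Real.sqrt_eq_rpow x
            rw [heq]
            exact tendsto_rpow_atTop (by norm_num)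
          exact h2.comp h1
        simp only [hF, one_div]
        exact hsq.inv_tendsto_atTop
    rw [show (∫ s in Ioi (0:ℝ), (0:ℝ)) = 0 by simp] at key
    exact key
  -- Tendsto to atTop at 0⁺
  · rw [tendsto_atTop]
    intro C
    -- the limiting lower integral is infinite
    have htop : (∫⁻ s in Ioc (0:ℝ) 1, ENNReal.ofReal (1 / Real.sqrt (2 * V s))) = ⊤ := by
      by_contra hfin
      have hVposIoc : ∀ s ∈ Ioc (0:ℝ) 1, 0 < 2 * V s := fun s hs => by
        have := hVpos s hs.1; linarith
      have hmeas : AEStronglyMeasurable (fun s => 1 / Real.sqrt (2 * V s))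
          (volume.restrict (Ioc (0:ℝ) 1)) := by
        apply ContinuousOn.aestronglyMeasurable _ measurableSet_Ioc
        intro s hs
        apply ContinuousWithinAt.div continuousWithinAt_const
        · exact (Real.continuous_sqrt.comp (by fun_prop)).continuousWithinAt
        · exact (Real.sqrt_pos.mpr (hVposIoc s hs)).ne'
      have hig : IntegrableOn (fun s => 1 / Real.sqrt (2 * V s)) (Ioc (0:ℝ) 1) := by
        refine ⟨hmeas, ?_⟩
        rw [hasFiniteIntegral_iff_ofReal]
        · exact lt_top_iff_ne_top.mpr hfin
        · filter_upwards with s; positivity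
      have hinv : IntegrableOn (fun s : ℝ => s⁻¹) (Ioc (0:ℝ) 1) := by
        apply Integrable.mono (hig.const_mul (Real.sqrt (2 * M)))
        · apply ContinuousOn.aestronglyMeasurable _ measurableSet_Ioc
          exact fun s hs => (continuousAt_inv₀ hs.1.ne').continuousWithinAt
        · filter_upwards [ae_restrict_mem measurableSet_Ioc] with s hs
          have hs0 : 0 < s := hs.1
          rw [Real.norm_eq_abs, Real.norm_eq_abs, abs_of_nonneg (by positivity),
            abs_of_nonneg (by positivity)]
          rw [inv_eq_one_div, mul_one_div,
            div_le_div_iff₀ hs0 (Real.sqrt_pos.mpr (hVposIoc s hs))]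
          calc 1 * Real.sqrt (2 * V s) = Real.sqrt (2 * V s) := one_mul _
            _ ≤ Real.sqrt (2 * (M * s ^ 2)) := Real.sqrt_le_sqrt (by nlinarith [hVq s hs])
            _ = Real.sqrt (2 * M) * s := by
                rw [show 2 * (M * s ^ 2) = (2 * M) * s ^ 2 by ring, Real.sqrt_mul (by positivity),
                  Real.sqrt_sq hs0.le]
      have : ¬ IntegrableOn (fun s : ℝ => s⁻¹) (Ioc (0:ℝ) 1) := by
        intro hcon
        have : IntervalIntegrable (fun s : ℝ => s⁻¹) volume 0 1 := by
          rw [intervalIntegrable_iff, uIoc_of_le (by norm_num : (0:ℝ) ≤ 1)]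
          exact hcon
        rw [intervalIntegrable_inv_iff] at this
        rcases this with h | h
        · norm_num at h
        · exact h (by norm_num)
      exact this hinv
    -- monotone convergence along h = 1/(n+1)
    set L : ℝ → ENNReal := fun h => ∫⁻ s in Ioc (0:ℝ) 1, ENNReal.ofReal (F h s) with hL
    have hmct : Tendsto (fun n : ℕ => L (1 / (n + 1))) atTop
        (nhds (∫⁻ s in Ioc (0:ℝ) 1, ENNReal.ofReal (1 / Real.sqrt (2 * V s)))) := by
      apply lintegral_tendsto_of_tendsto_of_monotone
      · intro n
        exact ((hFcont _ (by positivity)).measurable.ennreal_ofReal).aemeasurable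
      · filter_upwards with s
        intro n m hnm
        apply ENNReal.ofReal_le_ofReal
        apply hFmono _ _ (by positivity) _ s
        apply one_div_le_one_div_of_le (by positivity)
        have : (n:ℝ) + 1 ≤ (m:ℝ) + 1 := by exact_mod_cast Nat.succ_le_succ hnm
        linarith
      · filter_upwards [ae_restrict_mem measurableSet_Ioc] with s hs
        have hVs : 0 < V s := hVpos s hs.1
        have hc : ContinuousAt (fun t : ℝ => ENNReal.ofReal (1 / Real.sqrt (2 * (V s + t)))) 0 := by
          apply ENNReal.continuous_ofReal.continuousAt.comp
          apply ContinuousAt.div continuousAt_const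
          · exact (Real.continuous_sqrt.comp (by fun_prop)).continuousAt
          · rw [add_zero]
            exact (Real.sqrt_pos.mpr (by linarith)).ne'
        have := hc.tendsto.comp tendsto_one_div_add_atTop_nhds_zero_nat
        simpa [hF, Function.comp_def] using this
    have hLfin : ∀ h : ℝ, 0 < h → L h < ⊤ := by
      intro h hh
      have : IntegrableOn (F h) (Ioc (0:ℝ) 1) := (hint h hh).mono_set Ioc_subset_Ioi_self
      have h2 := this.2
      rw [hasFiniteIntegral_iff_ofReal (by filter_upwards with s; exact hFnn h s)] at h2
      exact h2
    rw [htop] at hmct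
    have hev : ∀ᶠ n : ℕ in atTop, ENNReal.ofReal C < L (1 / (n + 1)) :=
      hmct.eventually (lt_mem_nhds ENNReal.ofReal_lt_top)
    obtain ⟨n, hn⟩ := hev.exists
    set h₀ : ℝ := 1 / (n + 1) with hh₀def
    have h₀pos : 0 < h₀ := by positivity
    have hkey : C ≤ ∫ s in Ioi (0:ℝ), F h₀ s := by
      have h1 : (ENNReal.ofReal C).toReal ≤ (L h₀).toReal :=
        ENNReal.toReal_mono (hLfin h₀ h₀pos).ne hn.le
      have h2 : C ≤ (ENNReal.ofReal C).toReal := by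
        rcases le_total C 0 with hC0 | hC0
        · exact le_trans hC0 ENNReal.toReal_nonneg
        · rw [ENNReal.toReal_ofReal hC0]
      have h3 : (L h₀).toReal = ∫ s in Ioc (0:ℝ) 1, F h₀ s := by
        rw [integral_eq_lintegral_of_nonneg_ae (by filter_upwards with s; exact hFnn _ s)
          ((hFcont _ h₀pos).aestronglyMeasurable.restrict)]
      have h4 : (∫ s in Ioc (0:ℝ) 1, F h₀ s) ≤ ∫ s in Ioi (0:ℝ), F h₀ s :=
        setIntegral_mono_set (hint h₀ h₀pos) (by filter_upwards with s; exact hFnn _ s)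
          (HasSubset.Subset.eventuallyLE Ioc_subset_Ioi_self)
      linarith
    filter_upwards [Ioo_mem_nhdsGT h₀pos] with h hh
    refine le_trans hkey ?_
    exact integral_mono (hint h₀ h₀pos) (hint h hh.1) (fun s => hFmono h h₀ hh.1 hh.2.le s)

theorem lplus_lminus_properties
    (W : ℝ → ℝ) (hW : ContDiff ℝ 2 W) (hWnn : ∀ t, 0 ≤ W t)
    (hWconv : ConvexOn ℝ Set.univ W) (hWvan : ∀ t, W t = 0 ↔ t = 0)
    (hWint : IntegrableOn (fun u => 1 / Real.sqrt (W u)) {u : ℝ | 1 < |u|}) :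
    (∀ h : ℝ, 0 < h →
      IntegrableOn (fun s => 1 / Real.sqrt (2 * (W s + h))) (Ioi (0:ℝ)) ∧
      IntegrableOn (fun s => 1 / Real.sqrt (2 * (W s + h))) (Iio (0:ℝ))) ∧
    ContinuousOn (fun h => ∫ s in Ioi (0:ℝ), 1 / Real.sqrt (2 * (W s + h))) (Ioi 0) ∧
    ContinuousOn (fun h => ∫ s in Iio (0:ℝ), 1 / Real.sqrt (2 * (W s + h))) (Ioi 0) ∧
    StrictAntiOn (fun h => ∫ s in Ioi (0:ℝ), 1 / Real.sqrt (2 * (W s + h))) (Ioi 0) ∧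
    StrictAntiOn (fun h => ∫ s in Iio (0:ℝ), 1 / Real.sqrt (2 * (W s + h))) (Ioi 0) ∧
    Tendsto (fun h => ∫ s in Ioi (0:ℝ), 1 / Real.sqrt (2 * (W s + h))) atTop (nhds 0) ∧
    Tendsto (fun h => ∫ s in Iio (0:ℝ), 1 / Real.sqrt (2 * (W s + h))) atTop (nhds 0) ∧
    Tendsto (fun h => ∫ s in Ioi (0:ℝ), 1 / Real.sqrt (2 * (W s + h))) (nhdsWithin 0 (Ioi 0)) atTop ∧
    Tendsto (fun h => ∫ s in Iio (0:ℝ), 1 / Real.sqrt (2 * (W s + h))) (nhdsWithin 0 (Ioi 0)) atTop := by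
  have hWcont : Continuous W := hW.continuous
  have hWpos : ∀ t : ℝ, t ≠ 0 → 0 < W t := by
    intro t ht
    rcases lt_or_eq_of_le (hWnn t) with h | h
    · exact h
    · exact absurd ((hWvan t).mp h.symm) ht
  have hW0 : W 0 = 0 := (hWvan 0).mpr rfl
  -- the reflected potential
  set V₂ : ℝ → ℝ := fun s => W (-s) with hV₂
  have hV₂cd : ContDiff ℝ 2 V₂ := hW.comp (contDiff_id.neg)
  have hV₂c : Continuous V₂ := hWcont.comp continuous_neg
  have hV₂nn : ∀ t, 0 ≤ V₂ t := fun t => hWnn (-t)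
  have hV₂0 : V₂ 0 = 0 := by simp [hV₂, hW0]
  have hV₂pos : ∀ t ∈ Ioi (0:ℝ), 0 < V₂ t := fun t ht => hWpos (-t) (by simp; linarith [mem_Ioi.mp ht])
  obtain ⟨M₁, hM₁, hq₁⟩ := quad_bound W hW hWnn hW0
  obtain ⟨M₂, hM₂, hq₂⟩ := quad_bound V₂ hV₂cd hV₂nn hV₂0
  have hint₁ : IntegrableOn (fun u => 1 / Real.sqrt (W u)) (Ioi 1) :=
    hWint.mono_set (fun u hu => by
      simp only [mem_setOf_eq]
      rw [abs_of_pos (lt_trans one_pos hu)]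
      exact hu)
  have hint₂ : IntegrableOn (fun u => 1 / Real.sqrt (V₂ u)) (Ioi 1) := by
    have hpre : (Neg.neg ⁻¹' (Iio (-1:ℝ)) : Set ℝ) = Ioi 1 := by
      ext x; simp only [mem_preimage, mem_Iio, mem_Ioi]; constructor <;> intro <;> linarith
    have := ((Measure.measurePreserving_neg (volume : Measure ℝ)).integrableOn_comp_preimage
      (Homeomorph.neg ℝ).measurableEmbedding (f := fun u => 1 / Real.sqrt (W u))
      (s := Iio (-1:ℝ))).mpr
      (hWint.mono_set (fun u hu => by
        simp only [mem_setOf_eq]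
        rw [abs_of_neg (by linarith [mem_Iio.mp hu] : u < 0)]
        linarith [mem_Iio.mp hu]))
    rwa [hpre] at this
  obtain ⟨Pint₁, Pcont₁, Panti₁, Ptop₁, Pzero₁⟩ :=
    aux_half W hWcont hWnn M₁ hM₁ hq₁ hint₁ (fun t ht => hWpos t (ne_of_gt ht))
  obtain ⟨Pint₂, Pcont₂, Panti₂, Ptop₂, Pzero₂⟩ :=
    aux_half V₂ hV₂c hV₂nn M₂ hM₂ hq₂ hint₂ hV₂pos
  -- transfer between Iio and the reflected Ioi integrals
  have key : (fun h : ℝ => ∫ s in Iio (0:ℝ), 1 / Real.sqrt (2 * (W s + h))) =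
      fun h : ℝ => ∫ s in Ioi (0:ℝ), 1 / Real.sqrt (2 * (V₂ s + h)) := by
    funext h
    have := integral_comp_neg_Ioi (0:ℝ) (fun u => 1 / Real.sqrt (2 * (W u + h)))
    rw [neg_zero, integral_Iic_eq_integral_Iio] at this
    exact this.symm
  have keyint : ∀ h : ℝ, 0 < h →
      IntegrableOn (fun s => 1 / Real.sqrt (2 * (W s + h))) (Iio (0:ℝ)) := by
    intro h hh
    have hpre : (Neg.neg ⁻¹' (Iio (0:ℝ)) : Set ℝ) = Ioi 0 := by
      ext x; simp only [mem_preimage, mem_Iio, mem_Ioi]; constructor <;> intro <;> linarith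
    have := ((Measure.measurePreserving_neg (volume : Measure ℝ)).integrableOn_comp_preimage
      (Homeomorph.neg ℝ).measurableEmbedding
      (f := fun s => 1 / Real.sqrt (2 * (W s + h))) (s := Iio (0:ℝ)))
    rw [hpre] at this
    exact this.mp (Pint₂ h hh)
  exact ⟨fun h hh => ⟨Pint₁ h hh, keyint h hh⟩, Pcont₁, key ▸ Pcont₂, Panti₁, key ▸ Panti₂,
    Ptop₁, key ▸ Ptop₂, Pzero₁, key ▸ Pzero₂⟩
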